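/- Fix an integer N ≥ 1 and set c_j = −4j(2N+1−j)/(2N+1−2j)² for j = 1, …, N, ρ = 2 − 2/(2N+1), and η(ζ) = ((ρ−1)ζ − (ρ−2)) / (ρζ − (ρ−1)). Fix μ ∈ ℂ, μ ≠ 0, and define z(τ) = i·μ·τ·∏_{j=1}^N ((1 − c_j)τ² − 1), w(τ) = −μ²(τ² − 1)·∏_{j=1}^N ((1 − c_j)τ² − 1)². For τ ∈ ℂ set z₀ = ((τ+1)/τ)·z(τ), ζ = τ/(τ+1), ζ* = η(ζ), z* = z₀·ζ*, w* = 2·z*·z₀ − z₀². Then, for every τ such that τ ≠ 0, τ ≠ −1 and the denominator ρζ − (ρ−1) is nonzero, one has z* = z(τ + 2/(2N+1)) and w* = w(τ + 2/(2N+1)). (Thus in the coordinate τ the dual billiard map of type a1 acts on each invariant curve as the translation τ ↦ τ + 2/(2N+1).) -/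

import Mathlib

/-- Type a1 dual billiards: in the coordinate `τ` on an invariant curve, the dual billiard
map acts as the translation `τ ↦ τ + 2/(2N+1)`. -/
theorem stmt_2 (N : ℕ) (hN : 1 ≤ N)
    (c : Fin N → ℂ)
    (hc : ∀ j : Fin N, c j =
      -(4 * (((j : ℕ) : ℂ) + 1) * (2 * (N : ℂ) + 1 - (((j : ℕ) : ℂ) + 1))) /
        (2 * (N : ℂ) + 1 - 2 * (((j : ℕ) : ℂ) + 1)) ^ 2)
    (ρ : ℂ) (hρ : ρ = 2 - 2 / (2 * (N : ℂ) + 1))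
    (η : ℂ → ℂ) (hη : ∀ ζ : ℂ, η ζ = ((ρ - 1) * ζ - (ρ - 2)) / (ρ * ζ - (ρ - 1)))
    (μ : ℂ) (hμ : μ ≠ 0)
    (z w : ℂ → ℂ)
    (hz : ∀ τ : ℂ, z τ = Complex.I * μ * τ * ∏ j, ((1 - c j) * τ ^ 2 - 1))
    (hw : ∀ τ : ℂ, w τ = -μ ^ 2 * (τ ^ 2 - 1) * ∏ j, ((1 - c j) * τ ^ 2 - 1) ^ 2)
    (τ : ℂ) (hτ0 : τ ≠ 0) (hτ1 : τ ≠ -1)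
    (z₀ ζ ζs zs ws : ℂ)
    (hz₀ : z₀ = ((τ + 1) / τ) * z τ)
    (hζ : ζ = τ / (τ + 1))
    (hden : ρ * ζ - (ρ - 1) ≠ 0)
    (hζs : ζs = η ζ)
    (hzs : zs = z₀ * ζs)
    (hws : ws = 2 * zs * z₀ - z₀ ^ 2) :
    zs = z (τ + 2 / (2 * (N : ℂ) + 1)) ∧ ws = w (τ + 2 / (2 * (N : ℂ) + 1)) := by
  obtain ⟨n, hn_def⟩ : ∃ n : ℂ, n = 2 * (N : ℂ) + 1 := ⟨_, rfl⟩
  simp only [← hn_def] at hc hρ ⊢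
  have hn : n ≠ 0 := by
    have h1 : ((2 * N + 1 : ℕ) : ℂ) = n := by rw [hn_def]; push_cast; ring
    rw [← h1]
    exact Nat.cast_ne_zero.mpr (Nat.succ_ne_zero _)
  obtain ⟨τ', hτ'_def⟩ : ∃ t : ℂ, t = τ + 2 / n := ⟨_, rfl⟩
  rw [show τ + 2 / n = τ' from hτ'_def.symm]
  have hτp1 : τ + 1 ≠ 0 := by
    intro h; exact hτ1 (by linear_combination h)
  -- p j
  obtain ⟨p, hp_def⟩ : ∃ p : Fin N → ℂ, ∀ j, p j = n - 2 * (((j : ℕ) : ℂ) + 1) :=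
    ⟨_, fun _ => rfl⟩
  have hp : ∀ j : Fin N, p j ≠ 0 := by
    intro j
    have hk : (j : ℕ) + 1 ≤ N := j.2
    have h1 : p j = ((2 * (N - ((j : ℕ) + 1)) + 1 : ℕ) : ℂ) := by
      rw [hp_def, hn_def]
      push_cast [Nat.cast_sub hk]
      ring
    rw [h1]
    exact Nat.cast_ne_zero.mpr (Nat.succ_ne_zero _)
  have hfac : ∀ (j : Fin N) (s : ℂ),
      ((1 - c j) * s ^ 2 - 1) * (p j) ^ 2 = (n * s - p j) * (n * s + p j) := by
    intro j s
    have hpj := hp j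
    rw [hc j]
    rw [hp_def] at hpj ⊢
    have hq : (n - 2 * (((j : ℕ) : ℂ) + 1)) ^ 2 ≠ 0 := pow_ne_zero _ hpj
    linear_combination (4 * (((j : ℕ) : ℂ) + 1) * (n - (((j : ℕ) : ℂ) + 1))) * s ^ 2 * mul_inv_cancel₀ hq
  obtain ⟨A, hA_def⟩ : ∃ A : ℂ → ℂ, ∀ s, A s = ∏ j, ((1 - c j) * s ^ 2 - 1) :=
    ⟨_, fun _ => rfl⟩
  have hAfac : ∀ s : ℂ, A s * ∏ j, (p j) ^ 2 = ∏ j, ((n * s - p j) * (n * s + p j)) := by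
    intro s
    rw [hA_def, ← Finset.prod_mul_distrib]
    exact Finset.prod_congr rfl fun j _ => hfac j s
  have hX : (∏ j, (p j) ^ 2) ≠ 0 :=
    Finset.prod_ne_zero_iff.mpr fun j _ => pow_ne_zero _ (hp j)
  -- the key polynomial identity
  obtain ⟨x, hx_def⟩ : ∃ x : ℂ, x = n * τ := ⟨_, rfl⟩
  have hnτ' : n * τ' = x + 2 := by
    rw [hτ'_def, hx_def]; field_simp
  obtain ⟨F, hF_def⟩ : ∃ F : ℕ → ℂ, ∀ k, F k = x - (n - 2 * (k : ℂ)) := ⟨_, fun _ => rfl⟩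
  obtain ⟨G, hG_def⟩ : ∃ G : ℕ → ℂ, ∀ k, G k = x + (n - 2 * (k : ℂ)) := ⟨_, fun _ => rfl⟩
  have hFG : F (N + 1) = G N := by
    rw [hF_def, hG_def, hn_def]; push_cast; ring
  have hprod1 : ∏ j, ((n * τ - p j) * (n * τ + p j))
      = ∏ k ∈ Finset.range N, (F (k + 1) * G (k + 1)) := by
    rw [← Fin.prod_univ_eq_prod_range]
    refine Finset.prod_congr rfl fun j _ => ?_
    rw [hF_def, hG_def, hp_def, hx_def]; push_cast; ring
  have hprod2 : ∏ j, ((n * τ' - p j) * (n * τ' + p j))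
      = ∏ k ∈ Finset.range N, (F (k + 2) * G k) := by
    rw [← Fin.prod_univ_eq_prod_range]
    refine Finset.prod_congr rfl fun j _ => ?_
    rw [hF_def, hG_def, hp_def]
    push_cast
    linear_combination (n * τ' + x + 2) * hnτ'
  have e1 : (∏ k ∈ Finset.range N, F (k + 1)) * F (N + 1)
      = F 1 * ∏ k ∈ Finset.range N, F (k + 2) := by
    rw [← Finset.prod_range_succ (fun k => F (k + 1)) N]
    rw [Finset.prod_range_succ' (fun k => F (k + 1)) N]
    ring
  have e2 : (∏ k ∈ Finset.range N, G (k + 1)) * G 0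
      = (∏ k ∈ Finset.range N, G k) * G N := by
    rw [← Finset.prod_range_succ' (fun k => G k) N]
    rw [Finset.prod_range_succ (fun k => G k) N]
  have hkey : G 0 * ∏ k ∈ Finset.range N, (F (k + 1) * G (k + 1))
      = F 1 * ∏ k ∈ Finset.range N, (F (k + 2) * G k) := by
    rw [Finset.prod_mul_distrib, Finset.prod_mul_distrib]
    linear_combination e1 * (∏ k ∈ Finset.range N, G k) + e2 * (∏ k ∈ Finset.range N, F (k + 1))
      - (∏ k ∈ Finset.range N, F (k + 1)) * (∏ k ∈ Finset.range N, G k) * hFG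
  -- combine to get (τ+1) A τ = (τ'-1) A τ'
  have hG0 : G 0 = n * (τ + 1) := by rw [hG_def, hx_def]; push_cast; ring
  have hF1 : F 1 = n * (τ' - 1) := by
    rw [hF_def]; push_cast; linear_combination -hnτ'
  have hQ : (τ + 1) * A τ = (τ' - 1) * A τ' := by
    have h := hkey
    rw [← hprod1, ← hprod2, ← hAfac, ← hAfac, hG0, hF1] at h
    have hnX : n * (∏ j, (p j) ^ 2) ≠ 0 := mul_ne_zero hn hX
    apply mul_left_cancel₀ hnX
    linear_combination h
  -- τ' - 1 ≠ 0
  have hdenval : ρ * ζ - (ρ - 1) = (τ' - 1) / (τ + 1) := by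
    rw [hρ, hζ, hτ'_def]
    field_simp
    ring
  have hτ'1 : τ' - 1 ≠ 0 := by
    intro h
    apply hden
    rw [hdenval, h, zero_div]
  -- ζs
  have hnum : (ρ - 1) * ζ - (ρ - 2) = τ' / (τ + 1) := by
    rw [hρ, hζ, hτ'_def]
    field_simp
    ring
  have hζsval : ζs = τ' / (τ' - 1) := by
    rw [hζs, hη, hnum, hdenval]
    rw [div_div_div_eq]
    rw [div_eq_div_iff (by exact mul_ne_zero hτp1 hτ'1) hτ'1]
    ring
  have hz₀' : z₀ = Complex.I * μ * (τ + 1) * A τ := by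
    rw [hz₀, hz, ← hA_def]
    field_simp
  have hz₀'' : z₀ = Complex.I * μ * (τ' - 1) * A τ' := by
    rw [hz₀']; linear_combination Complex.I * μ * hQ
  have hzs' : zs = Complex.I * μ * τ' * A τ' := by
    rw [hzs, hζsval, hz₀'']
    field_simp
  constructor
  · rw [hzs', hz, ← hA_def]
  · rw [hws, hzs', hz₀'', hw]
    have hsq : ∏ j, ((1 - c j) * τ' ^ 2 - 1) ^ 2 = (A τ') ^ 2 := by
      rw [hA_def, ← Finset.prod_pow]
    rw [hsq]
    linear_combination (μ ^ 2 * (A τ') ^ 2 * (τ' ^ 2 - 1)) * Complex.I_sq
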